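/- Let ε > 0 and let u be a solution of ε²u″ + f(s,u) = 0 defined on all of ℝ. If u(s*) ∉ (0,1) for some s* ∈ ℝ, then either u(s) ∉ (0,1) for all s ≤ s*, or u(s) ∉ (0,1) for all s ≥ s*. -/

import Mathlib

open MeasureTheory Filter Set

noncomputable section

/-- `u` is a solution of `ε² u'' + f(s,u) = 0` on all of `ℝ`, with `v = u'`. -/
def IsSolNagumo (f : ℝ → ℝ → ℝ) (ε : ℝ) (u v : ℝ → ℝ) : Prop :=
  (∀ x : ℝ, HasDerivAt u (v x) x) ∧
  (∀ x : ℝ, v x = v 0 + ∫ t in (0:ℝ)..x, -(1 / ε ^ 2) * f t (u t))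

/-- Grönwall-type uniqueness to the right of a critical point. -/
lemma nagumo_core_right (u v g : ℝ → ℝ) (C : ℝ) (hC : 0 ≤ C) (c m b : ℝ)
    (hu : ∀ x, HasDerivAt u (v x) x)
    (hg : ∀ p q : ℝ, IntervalIntegrable g volume p q)
    (hv : ∀ x, v x = ∫ t in m..x, g t)
    (hgb : ∀ t, |g t| ≤ C * |u t - c|)
    (hum : u m = c) :
    ∀ x ∈ Set.Icc m b, u x = c := by
  have hvc : Continuous v :=
    Continuous.congr (intervalIntegral.continuous_primitive hg m) fun x => (hv x).symm
  have huc : Continuous u := continuous_iff_continuousAt.mpr fun x => (hu x).continuousAt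
  set w : ℝ → ℝ := fun t => |u t - c| + |v t| with hw
  have hwc : Continuous w := ((huc.sub continuous_const).abs.add hvc.abs)
  have hwnn : ∀ t, 0 ≤ w t := fun t => add_nonneg (abs_nonneg _) (abs_nonneg _)
  set φ : ℝ → ℝ := fun x => ∫ t in m..x, w t with hφ
  have hφd : ∀ x, HasDerivAt φ (w x) x := fun x =>
    intervalIntegral.integral_hasDerivAt_right (hwc.intervalIntegrable m x)
      (hwc.stronglyMeasurableAtFilter volume (nhds x)) hwc.continuousAt
  have hφnn : ∀ x, m ≤ x → 0 ≤ φ x := fun x hx =>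
    intervalIntegral.integral_nonneg hx fun t _ => hwnn t
  -- FTC for u
  have hftc : ∀ x, u x - u m = ∫ t in m..x, v t := fun x =>
    (intervalIntegral.integral_eq_sub_of_hasDerivAt
      (fun t _ => hu t) (hvc.intervalIntegrable m x)).symm
  -- bounds on [m, b]
  have habsu : ∀ x, m ≤ x → |u x - c| ≤ φ x := by
    intro x hx
    have h1 : |u x - c| = |∫ t in m..x, v t| := by rw [← hftc x, hum]
    rw [h1]
    calc |∫ t in m..x, v t| ≤ ∫ t in m..x, |v t| :=
          intervalIntegral.abs_integral_le_integral_abs hx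
      _ ≤ ∫ t in m..x, w t := by
          apply intervalIntegral.integral_mono_on hx (hvc.abs.intervalIntegrable m x)
            (hwc.intervalIntegrable m x)
          intro t _; exact le_add_of_nonneg_left (abs_nonneg _)
  have habsv : ∀ x, m ≤ x → |v x| ≤ C * φ x := by
    intro x hx
    rw [hv x]
    calc |∫ t in m..x, g t| ≤ ∫ t in m..x, |g t| :=
          intervalIntegral.abs_integral_le_integral_abs hx
      _ ≤ ∫ t in m..x, C * w t := by
          apply intervalIntegral.integral_mono_on hx ((hg m x).abs)
            ((hwc.intervalIntegrable m x).const_mul C)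
          intro t _
          calc |g t| ≤ C * |u t - c| := hgb t
            _ ≤ C * w t := by
                apply mul_le_mul_of_nonneg_left _ hC
                exact le_add_of_nonneg_right (abs_nonneg _)
      _ = C * φ x := intervalIntegral.integral_const_mul C w
  have hbound : ∀ x ∈ Set.Ico m b, ‖w x‖ ≤ (C + 1) * ‖φ x‖ + 0 := by
    intro x hx
    rw [Real.norm_eq_abs, Real.norm_eq_abs, abs_of_nonneg (hwnn x),
      abs_of_nonneg (hφnn x hx.1), add_zero]
    have h1 := habsu x hx.1
    have h2 := habsv x hx.1
    have h3 : w x = |u x - c| + |v x| := rfl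
    linarith
  have key : ∀ x ∈ Set.Icc m b, ‖φ x‖ ≤ gronwallBound 0 (C + 1) 0 (x - m) := by
    apply norm_le_gronwallBound_of_norm_deriv_right_le
      (fun x _ => (hφd x).continuousAt.continuousWithinAt)
      (fun x _ => (hφd x).hasDerivWithinAt)
    · simp [hφ]
    · exact hbound
  intro x hx
  have h0 : φ x = 0 := by
    have := key x hx
    rw [gronwallBound_ε0_δ0] at this
    have := hφnn x hx.1
    have : |φ x| ≤ 0 := by rwa [Real.norm_eq_abs] at *
    linarith [abs_nonneg (φ x), le_abs_self (φ x), neg_abs_le (φ x)]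
  have := habsu x hx.1
  rw [h0] at this
  have := abs_nonneg (u x - c)
  have : |u x - c| = 0 := le_antisymm (by linarith) (abs_nonneg _)
  have := abs_eq_zero.mp this
  linarith

/-- Grönwall-type uniqueness to the left of a critical point. -/
lemma nagumo_core_left (u v g : ℝ → ℝ) (C : ℝ) (hC : 0 ≤ C) (c m b : ℝ)
    (hu : ∀ x, HasDerivAt u (v x) x)
    (hg : ∀ p q : ℝ, IntervalIntegrable g volume p q)
    (hv : ∀ x, v x = ∫ t in m..x, g t)
    (hgb : ∀ t, |g t| ≤ C * |u t - c|)
    (hum : u m = c) :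
    ∀ x ∈ Set.Icc b m, u x = c := by
  set U : ℝ → ℝ := fun x => u (2 * m - x) with hU
  set V : ℝ → ℝ := fun x => -v (2 * m - x) with hV
  set G : ℝ → ℝ := fun x => g (2 * m - x) with hG
  have hrefl : ∀ x : ℝ, HasDerivAt (fun y : ℝ => 2 * m - y) (-1 : ℝ) x := by
    intro x
    simpa using (hasDerivAt_id x).const_sub (2 * m)
  have hU' : ∀ x, HasDerivAt U (V x) x := by
    intro x
    have := (hu (2 * m - x)).comp x (hrefl x)
    simpa [hU, hV, mul_comm, Function.comp_def] using this
  have hGint : ∀ p q : ℝ, IntervalIntegrable G volume p q := by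
    intro p q
    simpa using (hg (2 * m - p) (2 * m - q)).comp_sub_left (2 * m)
  have hVint : ∀ x, V x = ∫ t in m..x, G t := by
    intro x
    have h1 : (∫ t in m..x, G t) = ∫ t in (2*m - x)..(2*m - m), g t :=
      intervalIntegral.integral_comp_sub_left g (2 * m)
    show -v (2 * m - x) = ∫ t in m..x, G t
    simp only [hG] at h1 ⊢
    rw [h1, hv (2 * m - x), show (2 : ℝ) * m - m = m by ring,
      intervalIntegral.integral_symm, neg_neg]
  have hGb : ∀ t, |G t| ≤ C * |U t - c| := fun t => hgb (2 * m - t)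
  have hUm : U m = c := by simp only [hU]; rw [show (2:ℝ) * m - m = m by ring, hum]
  intro x hx
  have := nagumo_core_right U V G C hC c m (2 * m - b) hU' hGint hVint hGb hUm (2 * m - x)
    ⟨by linarith [hx.2], by linarith [hx.1]⟩
  simpa [hU, show 2 * m - (2 * m - x) = x by ring] using this

lemma nagumo_cover (δ : ℝ) (hδ : 0 < δ) (s : ℤ → ℝ) (hs : ∀ k : ℤ, δ ≤ s (k + 1) - s k)
    (x : ℝ) : ∃ k : ℤ, s k ≤ x ∧ x < s (k + 1) := by
  classical
  have hmono : StrictMono s := strictMono_int_of_lt_succ fun k => by linarith [hs k]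
  have hlin : ∀ (k : ℤ) (n : ℕ), s k + n * δ ≤ s (k + n) := by
    intro k n
    induction n with
    | zero => simp
    | succ n ih =>
      have h2 := hs (k + n)
      have heq : k + ((n : ℤ) + 1) = (k + n) + 1 := by ring
      push_cast
      rw [heq]
      linarith
  have hupper : ∃ n : ℤ, x < s n := by
    obtain ⟨N, hN⟩ := exists_nat_gt ((x - s 0) / δ)
    refine ⟨(0 : ℤ) + N, ?_⟩
    have : (x - s 0) / δ * δ < N * δ := by
      apply mul_lt_mul_of_pos_right hN hδ
    rw [div_mul_cancel₀ _ (ne_of_gt hδ)] at this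
    linarith [hlin 0 N]
  have hlower : ∃ n : ℤ, s n ≤ x := by
    obtain ⟨N, hN⟩ := exists_nat_gt ((s 0 - x) / δ)
    refine ⟨-(N : ℤ), ?_⟩
    have h1 := hlin (-(N : ℤ)) N
    simp only [neg_add_cancel] at h1
    have : (s 0 - x) / δ * δ < N * δ := mul_lt_mul_of_pos_right hN hδ
    rw [div_mul_cancel₀ _ (ne_of_gt hδ)] at this
    linarith
  obtain ⟨n₀, hn₀⟩ := hlower
  have hbdd : ∃ b : ℤ, ∀ z : ℤ, x < s z → b ≤ z := by
    refine ⟨n₀ + 1, ?_⟩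
    intro z hz
    by_contra h
    push_neg at h
    have : z ≤ n₀ := by omega
    have := hmono.le_iff_le.mpr this
    linarith
  obtain ⟨lb, hlb1, hlb2⟩ := Int.exists_least_of_bdd hbdd hupper
  refine ⟨lb - 1, ?_, ?_⟩
  · by_contra h
    push_neg at h
    have := hlb2 (lb - 1) h
    omega
  · rw [sub_add_cancel]; exact hlb1

lemma nagumo_aval (am ap δ : ℝ) (hδ : 0 < δ) (s : ℤ → ℝ) (hs : ∀ k : ℤ, δ ≤ s (k + 1) - s k)
    (a : ℝ → ℝ)
    (haval : ∀ k : ℤ,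
      (∀ x : ℝ, s (2 * k) ≤ x → x < s (2 * k + 1) → a x = am) ∧
      (∀ x : ℝ, s (2 * k + 1) ≤ x → x < s (2 * k + 2) → a x = ap)) :
    ∀ x : ℝ, a x = am ∨ a x = ap := by
  intro x
  obtain ⟨k, hk1, hk2⟩ := nagumo_cover δ hδ s hs x
  rcases Int.even_or_odd k with ⟨j, hj⟩ | ⟨j, hj⟩
  · left
    exact (haval j).1 x (by rw [show 2 * j = k by omega]; exact hk1)
      (by rw [show 2 * j + 1 = k + 1 by omega]; exact hk2)
  · right
    exact (haval j).2 x (by rw [show 2 * j + 1 = k by omega]; exact hk1)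
      (by rw [show 2 * j + 2 = k + 1 by omega]; exact hk2)

lemma nagumo_ameas (am ap δ : ℝ) (hδ : 0 < δ) (s : ℤ → ℝ) (hs : ∀ k : ℤ, δ ≤ s (k + 1) - s k)
    (a : ℝ → ℝ)
    (haval : ∀ k : ℤ,
      (∀ x : ℝ, s (2 * k) ≤ x → x < s (2 * k + 1) → a x = am) ∧
      (∀ x : ℝ, s (2 * k + 1) ≤ x → x < s (2 * k + 2) → a x = ap)) :
    Measurable a := by
  classical
  set S : Set ℝ := ⋃ k : ℤ, Set.Ico (s (2 * k)) (s (2 * k + 1)) with hS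
  have hSm : MeasurableSet S := MeasurableSet.iUnion fun k => measurableSet_Ico
  have : a = fun x => if x ∈ S then am else ap := by
    funext x
    by_cases hx : x ∈ S
    · simp only [hx, if_true]
      obtain ⟨k, hk⟩ := Set.mem_iUnion.mp hx
      exact (haval k).1 x hk.1 hk.2
    · simp only [hx, if_false]
      obtain ⟨k, hk1, hk2⟩ := nagumo_cover δ hδ s hs x
      rcases Int.even_or_odd k with ⟨j, hj⟩ | ⟨j, hj⟩
      · exfalso
        exact hx (Set.mem_iUnion.mpr ⟨j, ⟨by rw [show 2 * j = k by omega] at *; exact hk1,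
          by rw [show 2 * j + 1 = k + 1 by omega]; exact hk2⟩⟩)
      · exact (haval j).2 x (by rw [show 2 * j + 1 = k by omega]; exact hk1)
          (by rw [show 2 * j + 2 = k + 1 by omega]; exact hk2)
  rw [this]
  exact Measurable.ite hSm measurable_const measurable_const

theorem stmt_12
    (am ap δ : ℝ) (ham : 0 < am) (ham' : am < 1 / 2) (hap : 1 / 2 < ap) (hap' : ap < 1)
    (s : ℤ → ℝ) (hδ : 0 < δ) (hs : ∀ k : ℤ, δ ≤ s (k + 1) - s k)
    (a : ℝ → ℝ)
    (haval : ∀ k : ℤ,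
      (∀ x : ℝ, s (2 * k) ≤ x → x < s (2 * k + 1) → a x = am) ∧
      (∀ x : ℝ, s (2 * k + 1) ≤ x → x < s (2 * k + 2) → a x = ap))
    (f : ℝ → ℝ → ℝ)
    (hf : ∀ t u : ℝ, f t u = if 0 ≤ u ∧ u ≤ 1 then u * (1 - u) * (u - a t) else 0)
    (ε : ℝ) (hε : 0 < ε)
    (u v : ℝ → ℝ) (hsol : IsSolNagumo f ε u v)
    (sstar : ℝ) (hustar : u sstar ∉ Set.Ioo (0:ℝ) 1) :
    (∀ x : ℝ, x ≤ sstar → u x ∉ Set.Ioo (0:ℝ) 1) ∨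
    (∀ x : ℝ, sstar ≤ x → u x ∉ Set.Ioo (0:ℝ) 1) := by
  obtain ⟨hu, hv0⟩ := hsol
  by_contra hcon
  push_neg at hcon
  obtain ⟨⟨x₁, hx₁le, hx₁⟩, ⟨x₂, hx₂le, hx₂⟩⟩ := hcon
  simp only [Set.mem_Ioo] at hx₁ hx₂
  set g : ℝ → ℝ := fun t => -(1 / ε ^ 2) * f t (u t) with hgdef
  have haval' := nagumo_aval am ap δ hδ s hs a haval
  have hε2 : (0:ℝ) < 1 / ε ^ 2 := by positivity
  have huc : Continuous u := continuous_iff_continuousAt.mpr fun x => (hu x).continuousAt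
  have ha01 : ∀ t, 0 ≤ a t ∧ a t ≤ 1 := by
    intro t
    rcases haval' t with h | h <;> rw [h] <;> constructor <;> linarith
  -- measurability and integrability of g
  have hfm : Measurable fun t => f t (u t) := by
    have : (fun t => f t (u t)) = fun t =>
        if t ∈ {t : ℝ | 0 ≤ u t ∧ u t ≤ 1} then u t * (1 - u t) * (u t - a t) else 0 := by
      funext t; rw [hf t (u t)]; rfl
    rw [this]
    apply Measurable.ite
    · exact ((isClosed_le continuous_const huc).inter
        (isClosed_le huc continuous_const)).measurableSet
    · exact ((huc.mul (continuous_const.sub huc)).measurable).mul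
        (huc.measurable.sub (nagumo_ameas am ap δ hδ s hs a haval))
    · exact measurable_const
  have hfb : ∀ t, |f t (u t)| ≤ 1 := by
    intro t
    rw [hf t (u t)]
    split_ifs with h
    · obtain ⟨h0, h1⟩ := h
      obtain ⟨ha0, ha1⟩ := ha01 t
      rw [abs_mul, abs_mul]
      have e0 : |u t| ≤ 1 := by rw [abs_of_nonneg h0]; exact h1
      have e1 : |1 - u t| ≤ 1 := abs_le.mpr ⟨by linarith, by linarith⟩
      have e2 : |u t - a t| ≤ 1 := abs_le.mpr ⟨by linarith, by linarith⟩
      calc |u t| * |1 - u t| * |u t - a t| ≤ |u t| * |1 - u t| * 1 :=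
            mul_le_mul_of_nonneg_left e2 (mul_nonneg (abs_nonneg _) (abs_nonneg _))
        _ = |u t| * |1 - u t| := mul_one _
        _ ≤ 1 := by nlinarith [abs_nonneg (u t), abs_nonneg (1 - u t)]
    · simp
  have hgm : Measurable g := hfm.const_mul _
  have hgint : ∀ p q : ℝ, IntervalIntegrable g volume p q := by
    intro p q
    rw [intervalIntegrable_iff]
    apply MeasureTheory.Integrable.mono'
      (g := fun _ => (1 / ε ^ 2)) (integrableOn_const measure_Ioc_lt_top.ne)
      (hgm.aestronglyMeasurable.restrict)
    apply Filter.Eventually.of_forall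
    intro t
    rw [hgdef]
    rw [Real.norm_eq_abs, abs_mul, abs_neg, abs_of_pos hε2]
    calc (1 / ε ^ 2) * |f t (u t)| ≤ (1 / ε ^ 2) * 1 :=
        mul_le_mul_of_nonneg_left (hfb t) (le_of_lt hε2)
      _ = 1 / ε ^ 2 := mul_one _
  -- basic facts
  have hx12 : x₁ ≤ x₂ := le_trans hx₁le hx₂le
  have hsmem : sstar ∈ Set.Icc x₁ x₂ := ⟨hx₁le, hx₂le⟩
  have hcase : u sstar ≤ 0 ∨ 1 ≤ u sstar := by
    by_contra hcc
    push_neg at hcc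
    exact hustar (Set.mem_Ioo.mpr ⟨hcc.1, hcc.2⟩)
  rcases hcase with hc | hc
  -- Case 1: u sstar ≤ 0, use minimum
  · obtain ⟨m, hm_mem, hm_min⟩ :=
      isCompact_Icc.exists_isMinOn (Set.nonempty_Icc.mpr hx12) huc.continuousOn
    have humle : u m ≤ 0 := le_trans (hm_min hsmem) hc
    have hmx1 : x₁ < m := by
      rcases eq_or_lt_of_le hm_mem.1 with h | h
      · exfalso; rw [← h] at humle; linarith [hx₁.1]
      · exact h
    have hmx2 : m < x₂ := by
      rcases eq_or_lt_of_le hm_mem.2 with h | h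
      · exfalso; rw [h] at humle; linarith [hx₂.1]
      · exact h
    have hvm : v m = 0 :=
      (hm_min.isLocalMin (Icc_mem_nhds hmx1 hmx2)).hasDerivAt_eq_zero (hu m)
    have hvint : ∀ x, v x = ∫ t in m..x, g t := by
      intro x
      have h1 := hv0 x
      have h2 := hv0 m
      rw [hvm ] at h2
      have h3 := intervalIntegral.integral_interval_sub_left (hgint 0 x) (hgint 0 m)
      rw [← h3, h1]
      linarith
    have hgb : ∀ t, |g t| ≤ (1 / ε ^ 2) * |u t - u m| := by
      intro t
      have hfl : |f t (u t)| ≤ |u t - u m| := by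
        rw [hf t (u t)]
        split_ifs with h
        · obtain ⟨h0, h1⟩ := h
          obtain ⟨ha0, ha1⟩ := ha01 t
          have e1 : |1 - u t| ≤ 1 := abs_le.mpr ⟨by linarith, by linarith⟩
          have e2 : |u t - a t| ≤ 1 := abs_le.mpr ⟨by linarith, by linarith⟩
          have e3 : |u t * (1 - u t) * (u t - a t)| ≤ u t := by
            rw [abs_mul, abs_mul, abs_of_nonneg h0]
            calc u t * |1 - u t| * |u t - a t| ≤ u t * |1 - u t| * 1 :=
                mul_le_mul_of_nonneg_left e2 (mul_nonneg h0 (abs_nonneg _))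
              _ = u t * |1 - u t| := mul_one _
              _ ≤ u t * 1 := mul_le_mul_of_nonneg_left e1 h0
              _ = u t := mul_one _
          have e4 : u t ≤ |u t - u m| := by
            rw [abs_of_nonneg (by linarith : (0:ℝ) ≤ u t - u m)]; linarith
          linarith
        · simpa using abs_nonneg (u t - u m)
      show |-(1 / ε ^ 2) * f t (u t)| ≤ (1 / ε ^ 2) * |u t - u m|
      rw [abs_mul, abs_neg, abs_of_pos hε2]
      exact mul_le_mul_of_nonneg_left hfl (le_of_lt hε2)
    have := nagumo_core_left u v g (1 / ε ^ 2) (le_of_lt hε2) (u m) m x₁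
      hu hgint hvint hgb rfl x₁ ⟨le_refl x₁, le_of_lt hmx1⟩
    rw [this] at hx₁
    linarith [hx₁.1]
  -- Case 2: 1 ≤ u sstar, use maximum
  · obtain ⟨m, hm_mem, hm_max⟩ :=
      isCompact_Icc.exists_isMaxOn (Set.nonempty_Icc.mpr hx12) huc.continuousOn
    have humge : 1 ≤ u m := le_trans hc (hm_max hsmem)
    have hmx1 : x₁ < m := by
      rcases eq_or_lt_of_le hm_mem.1 with h | h
      · exfalso; rw [← h] at humge; linarith [hx₁.2]
      · exact h
    have hmx2 : m < x₂ := by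
      rcases eq_or_lt_of_le hm_mem.2 with h | h
      · exfalso; rw [h] at humge; linarith [hx₂.2]
      · exact h
    have hvm : v m = 0 :=
      (hm_max.isLocalMax (Icc_mem_nhds hmx1 hmx2)).hasDerivAt_eq_zero (hu m)
    have hvint : ∀ x, v x = ∫ t in m..x, g t := by
      intro x
      have h1 := hv0 x
      have h2 := hv0 m
      rw [hvm ] at h2
      have h3 := intervalIntegral.integral_interval_sub_left (hgint 0 x) (hgint 0 m)
      rw [← h3, h1]
      linarith
    have hgb : ∀ t, |g t| ≤ (1 / ε ^ 2) * |u t - u m| := by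
      intro t
      have hfl : |f t (u t)| ≤ |u t - u m| := by
        rw [hf t (u t)]
        split_ifs with h
        · obtain ⟨h0, h1⟩ := h
          obtain ⟨ha0, ha1⟩ := ha01 t
          have e0 : |u t| ≤ 1 := by rw [abs_of_nonneg h0]; exact h1
          have e2 : |u t - a t| ≤ 1 := abs_le.mpr ⟨by linarith, by linarith⟩
          have e3 : |u t * (1 - u t) * (u t - a t)| ≤ 1 - u t := by
            rw [abs_mul, abs_mul, abs_of_nonneg (by linarith : (0:ℝ) ≤ 1 - u t)]
            calc |u t| * (1 - u t) * |u t - a t| ≤ |u t| * (1 - u t) * 1 :=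
                mul_le_mul_of_nonneg_left e2 (mul_nonneg (abs_nonneg _) (by linarith))
              _ = |u t| * (1 - u t) := mul_one _
              _ ≤ 1 * (1 - u t) := mul_le_mul_of_nonneg_right e0 (by linarith)
              _ = 1 - u t := one_mul _
          have e4 : 1 - u t ≤ |u t - u m| := by
            rw [abs_of_nonpos (by linarith : u t - u m ≤ (0:ℝ))]; linarith
          linarith
        · simpa using abs_nonneg (u t - u m)
      show |-(1 / ε ^ 2) * f t (u t)| ≤ (1 / ε ^ 2) * |u t - u m|
      rw [abs_mul, abs_neg, abs_of_pos hε2]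
      exact mul_le_mul_of_nonneg_left hfl (le_of_lt hε2)
    have := nagumo_core_left u v g (1 / ε ^ 2) (le_of_lt hε2) (u m) m x₁
      hu hgint hvint hgb rfl x₁ ⟨le_refl x₁, le_of_lt hmx1⟩
    rw [this] at hx₁
    linarith [hx₁.2]
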